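/- arXiv:1409.5893 — 5 statements merged into one kernel-verified Lean document; each statement's English description precedes it below -/
import Mathlib

section
/- For every integer ℓ ≥ 0 and every function f : ℝ → ℂ that is (ℓ+2)-times continuously differentiable, the function Ψ(t, r) = Σ_{k=0}^{ℓ} c_{ℓk} r^{−k} f^{(ℓ−k)}(t − r), where f^{(m)} denotes the m-th derivative of f, satisfies the radial wave equation ∂ₜ²Ψ(t,r) − ∂ᵣ²Ψ(t,r) + ℓ(ℓ+1) r^{−2} Ψ(t,r) = 0 for all t ∈ ℝ and all r > 0 (this is the general outgoing multipole solution; for ℓ = 2 it reads Ψ(t,r) = f''(t−r) + (3/r) f'(t−r) + (3/r²) f(t−r)). -/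
/-- The coefficients `c_{ℓk} = (ℓ+k)! / (2^k k! (ℓ-k)!)`. -/
noncomputable def besselCoeff (ℓ k : ℕ) : ℂ :=
  (Nat.factorial (ℓ + k) : ℂ) / (2 ^ k * Nat.factorial k * Nat.factorial (ℓ - k))

/-- The general outgoing multipole solution
`Ψ(t,r) = ∑_{k=0}^ℓ c_{ℓk} r^{-k} f^{(ℓ-k)}(t - r)`. -/
noncomputable def outgoingMultipole (ℓ : ℕ) (f : ℝ → ℂ) (t r : ℝ) : ℂ :=
  ∑ k ∈ Finset.range (ℓ + 1),
    besselCoeff ℓ k / (r : ℂ) ^ k * iteratedDeriv (ℓ - k) f (t - r)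

/-- Derivative of `r ↦ a / r^k * u (t - r)`. -/
private lemma auxR (a : ℂ) (k : ℕ) {r : ℝ} (hr : r ≠ 0) (t : ℝ) {u : ℝ → ℂ} {u' : ℂ}
    (hu : HasDerivAt u u' (t - r)) :
    HasDerivAt (fun r' : ℝ => a / (r':ℂ)^k * u (t - r'))
      (-(k:ℂ) * a / (r:ℂ)^(k+1) * u (t-r) - a/(r:ℂ)^k * u') r := by
  have hrc : (r:ℂ) ≠ 0 := Complex.ofReal_ne_zero.mpr hr
  have hinv : HasDerivAt (fun r : ℝ => ((r:ℂ)^k)⁻¹) (-(k:ℂ) / (r:ℂ)^(k+1)) r := by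
    have hc : HasDerivAt (fun z : ℂ => (z^k)⁻¹)
        (-((k:ℂ) * (r:ℂ)^(k-1)) / ((r:ℂ)^k)^2) (r:ℂ) :=
      (hasDerivAt_pow k (r:ℂ)).inv (pow_ne_zero _ hrc)
    convert hc.comp_ofReal using 1
    rcases k with _ | k
    · simp
    · simp only [Nat.add_sub_cancel]; field_simp; ring
  have hsub : HasDerivAt (fun r' : ℝ => t - r') (-1 : ℝ) r := by
    simpa using (hasDerivAt_id r).const_sub t
  have hcomp : HasDerivAt (fun r' : ℝ => u (t - r')) ((-1 : ℝ) • u') r :=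
    hu.scomp r hsub
  have := (hinv.const_mul a).fun_mul hcomp
  refine this.congr_deriv ?_
  simp [div_eq_mul_inv]
  ring

/-- Derivative of `t ↦ a / r^k * u (t - r)`. -/
private lemma auxT (a : ℂ) (k : ℕ) (r t : ℝ) {u : ℝ → ℂ} {u' : ℂ}
    (hu : HasDerivAt u u' (t - r)) :
    HasDerivAt (fun t' : ℝ => a / (r:ℂ)^k * u (t' - r)) (a/(r:ℂ)^k * u') t := by
  have hsub : HasDerivAt (fun t' : ℝ => t' - r) (1 : ℝ) t := (hasDerivAt_id t).sub_const r
  have hcomp : HasDerivAt (fun t' : ℝ => u (t' - r)) ((1 : ℝ) • u') t := hu.scomp t hsub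
  simpa using hcomp.const_mul (a / (r:ℂ)^k)

/-- The recurrence `(ℓ(ℓ+1) - k(k+1)) c_{ℓk} = 2(k+1) c_{ℓ,k+1}` for `k < ℓ`. -/
private lemma coeff_ident (ℓ k : ℕ) (hk : k < ℓ) :
    ((ℓ:ℂ)*((ℓ:ℂ)+1) - (k:ℂ)*((k:ℂ)+1)) * besselCoeff ℓ k
      = 2*((k:ℂ)+1) * besselCoeff ℓ (k+1) := by
  have hnat : (ℓ+k+1)*(ℓ-k) * Nat.factorial (ℓ+k)
        * (2^(k+1) * Nat.factorial (k+1) * Nat.factorial (ℓ-(k+1)))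
      = 2*(k+1) * Nat.factorial (ℓ+(k+1))
        * (2^k * Nat.factorial k * Nat.factorial (ℓ-k)) := by
    have e1 : ℓ + (k+1) = (ℓ+k)+1 := by omega
    have e2 : ℓ - k = (ℓ-(k+1)) + 1 := by omega
    rw [e1, e2, Nat.factorial_succ (ℓ+k), Nat.factorial_succ k,
      Nat.factorial_succ (ℓ-(k+1)), pow_succ]
    ring
  have hcast : ((ℓ:ℂ)*((ℓ:ℂ)+1) - (k:ℂ)*((k:ℂ)+1)) = (((ℓ+k+1)*(ℓ-k) : ℕ) : ℂ) := by
    push_cast [Nat.cast_sub hk.le]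
    ring
  have hcast2 : (2:ℂ)*((k:ℂ)+1) = ((2*(k+1) : ℕ) : ℂ) := by push_cast; ring
  have hfac : ∀ n : ℕ, ((Nat.factorial n : ℕ) : ℂ) ≠ 0 := fun n => by
    exact_mod_cast (Nat.factorial_pos n).ne'
  have hb : ((2:ℂ) ^ k * Nat.factorial k * Nat.factorial (ℓ - k)) ≠ 0 :=
    mul_ne_zero (mul_ne_zero (pow_ne_zero _ two_ne_zero) (hfac _)) (hfac _)
  have hd : ((2:ℂ) ^ (k+1) * Nat.factorial (k+1) * Nat.factorial (ℓ - (k+1))) ≠ 0 :=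
    mul_ne_zero (mul_ne_zero (pow_ne_zero _ two_ne_zero) (hfac _)) (hfac _)
  rw [hcast, hcast2]
  unfold besselCoeff
  rw [← mul_div_assoc, ← mul_div_assoc, div_eq_div_iff hb hd]
  push_cast
  exact_mod_cast hnat

/-- Abstract form of the telescoping sum. -/
private lemma sumAB (ℓ : ℕ) (X Y : ℕ → ℂ) (hXY : ∀ k < ℓ, Y (k+1) = X k) (r : ℂ) :
    ∑ k ∈ Finset.range (ℓ+1),
      (((ℓ:ℂ)*((ℓ:ℂ)+1) - (k:ℂ)*((k:ℂ)+1)) * besselCoeff ℓ k / r^(k+2) * X k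
       - 2*(k:ℂ) * besselCoeff ℓ k / r^(k+1) * Y k) = 0 := by
  rw [Finset.sum_sub_distrib]
  have hA : ∑ k ∈ Finset.range (ℓ+1),
      ((ℓ:ℂ)*((ℓ:ℂ)+1) - (k:ℂ)*((k:ℂ)+1)) * besselCoeff ℓ k / r^(k+2) * X k
      = ∑ k ∈ Finset.range ℓ,
      ((ℓ:ℂ)*((ℓ:ℂ)+1) - (k:ℂ)*((k:ℂ)+1)) * besselCoeff ℓ k / r^(k+2) * X k := by
    rw [Finset.sum_range_succ]; simp
  have hB : ∑ k ∈ Finset.range (ℓ+1),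
      2*(k:ℂ) * besselCoeff ℓ k / r^(k+1) * Y k
      = ∑ k ∈ Finset.range ℓ,
      2*((k:ℂ)+1) * besselCoeff ℓ (k+1) / r^(k+2) * Y (k+1) := by
    rw [Finset.sum_range_succ']
    push_cast
    simp
  rw [hA, hB]
  rw [sub_eq_zero]
  apply Finset.sum_congr rfl
  intro k hk
  have hkℓ : k < ℓ := Finset.mem_range.mp hk
  rw [hXY k hkℓ, coeff_ident ℓ k hkℓ]

/-- For every `ℓ ≥ 0` and every `(ℓ+2)`-times continuously differentiable `f : ℝ → ℂ`,
the outgoing multipole `Ψ(t,r) = ∑_{k=0}^ℓ c_{ℓk} r^{-k} f^{(ℓ-k)}(t-r)` satisfies the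
radial wave equation `∂ₜ²Ψ - ∂ᵣ²Ψ + ℓ(ℓ+1) r^{-2} Ψ = 0` for all `t` and all `r > 0`. -/
theorem stmt_1 (ℓ : ℕ) (f : ℝ → ℂ) (hf : ContDiff ℝ (ℓ + 2 : ℕ) f) :
    ∀ (t r : ℝ), 0 < r →
      deriv (fun t' : ℝ => deriv (fun t'' : ℝ => outgoingMultipole ℓ f t'' r) t') t
      - deriv (fun r' : ℝ => deriv (fun r'' : ℝ => outgoingMultipole ℓ f t r'') r') r
      + (ℓ : ℂ) * ((ℓ : ℂ) + 1) / (r : ℂ) ^ 2 * outgoingMultipole ℓ f t r = 0 := by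
  intro t r hr
  have hrne : r ≠ 0 := ne_of_gt hr
  have hrc : (r:ℂ) ≠ 0 := Complex.ofReal_ne_zero.mpr hrne
  have hgd : ∀ m, m ≤ ℓ + 1 → ∀ x : ℝ,
      HasDerivAt (iteratedDeriv m f) (iteratedDeriv (m+1) f x) x := by
    intro m hm x
    have hd : Differentiable ℝ (iteratedDeriv m f) :=
      hf.differentiable_iteratedDeriv m (by exact_mod_cast (show m < ℓ + 2 by omega))
    have h := (hd x).hasDerivAt
    rw [iteratedDeriv_succ]
    exact h
  -- time derivatives
  have hT1 : ∀ t', HasDerivAt (fun t'' => outgoingMultipole ℓ f t'' r)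
      (∑ k ∈ Finset.range (ℓ+1),
        besselCoeff ℓ k / (r:ℂ)^k * iteratedDeriv (ℓ - k + 1) f (t' - r)) t' := by
    intro t'
    simp only [outgoingMultipole]
    apply HasDerivAt.fun_sum
    intro k hk
    exact auxT _ k r t' (hgd (ℓ - k) (by omega) (t' - r))
  have hT2 : HasDerivAt (fun t' => ∑ k ∈ Finset.range (ℓ+1),
        besselCoeff ℓ k / (r:ℂ)^k * iteratedDeriv (ℓ - k + 1) f (t' - r))
      (∑ k ∈ Finset.range (ℓ+1),
        besselCoeff ℓ k / (r:ℂ)^k * iteratedDeriv (ℓ - k + 2) f (t - r)) t := by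
    apply HasDerivAt.fun_sum
    intro k hk
    have := auxT (besselCoeff ℓ k) k r t (hgd (ℓ - k + 1) (by omega) (t - r))
    have heq : ℓ - k + 1 + 1 = ℓ - k + 2 := by omega
    rwa [heq] at this
  have e1 : deriv (fun t' : ℝ => deriv (fun t'' : ℝ => outgoingMultipole ℓ f t'' r) t') t
      = ∑ k ∈ Finset.range (ℓ+1),
        besselCoeff ℓ k / (r:ℂ)^k * iteratedDeriv (ℓ - k + 2) f (t - r) := by
    have hfe : (fun t' : ℝ => deriv (fun t'' : ℝ => outgoingMultipole ℓ f t'' r) t')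
        = fun t' => ∑ k ∈ Finset.range (ℓ+1),
          besselCoeff ℓ k / (r:ℂ)^k * iteratedDeriv (ℓ - k + 1) f (t' - r) :=
      funext fun t' => (hT1 t').deriv
    rw [hfe]
    exact hT2.deriv
  -- radial derivatives
  set F : ℝ → ℂ := fun r' => ∑ k ∈ Finset.range (ℓ+1),
      (-(k:ℂ) * besselCoeff ℓ k / (r':ℂ)^(k+1) * iteratedDeriv (ℓ - k) f (t - r')
        - besselCoeff ℓ k / (r':ℂ)^k * iteratedDeriv (ℓ - k + 1) f (t - r')) with hF
  have hR1 : ∀ r' : ℝ, r' ≠ 0 →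
      HasDerivAt (fun r'' => outgoingMultipole ℓ f t r'') (F r') r' := by
    intro r' hr'
    simp only [outgoingMultipole, hF]
    apply HasDerivAt.fun_sum
    intro k hk
    exact auxR (besselCoeff ℓ k) k hr' t (hgd (ℓ - k) (by omega) (t - r'))
  have hR2 : HasDerivAt F
      (∑ k ∈ Finset.range (ℓ+1),
        ((-((k:ℕ)+1:ℕ) * (-(k:ℂ) * besselCoeff ℓ k) / (r:ℂ)^(k+1+1)
            * iteratedDeriv (ℓ - k) f (t - r)
          - (-(k:ℂ) * besselCoeff ℓ k) / (r:ℂ)^(k+1) * iteratedDeriv (ℓ - k + 1) f (t - r))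
        - (-(k:ℂ) * besselCoeff ℓ k / (r:ℂ)^(k+1) * iteratedDeriv (ℓ - k + 1) f (t - r)
          - besselCoeff ℓ k / (r:ℂ)^k * iteratedDeriv (ℓ - k + 2) f (t - r)))) r := by
    rw [hF]
    apply HasDerivAt.fun_sum
    intro k hk
    have h1 := auxR (-(k:ℂ) * besselCoeff ℓ k) (k+1) hrne t
      (hgd (ℓ - k) (by omega) (t - r))
    have h2 := auxR (besselCoeff ℓ k) k hrne t
      (hgd (ℓ - k + 1) (by omega) (t - r))
    have heq : ℓ - k + 1 + 1 = ℓ - k + 2 := by omega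
    rw [heq] at h2
    exact h1.sub h2
  have e2 : deriv (fun r' : ℝ => deriv (fun r'' : ℝ => outgoingMultipole ℓ f t r'') r') r
      = ∑ k ∈ Finset.range (ℓ+1),
        ((-((k:ℕ)+1:ℕ) * (-(k:ℂ) * besselCoeff ℓ k) / (r:ℂ)^(k+1+1)
            * iteratedDeriv (ℓ - k) f (t - r)
          - (-(k:ℂ) * besselCoeff ℓ k) / (r:ℂ)^(k+1) * iteratedDeriv (ℓ - k + 1) f (t - r))
        - (-(k:ℂ) * besselCoeff ℓ k / (r:ℂ)^(k+1) * iteratedDeriv (ℓ - k + 1) f (t - r)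
          - besselCoeff ℓ k / (r:ℂ)^k * iteratedDeriv (ℓ - k + 2) f (t - r))) := by
    have hev : (fun r' : ℝ => deriv (fun r'' : ℝ => outgoingMultipole ℓ f t r'') r')
        =ᶠ[nhds r] F := by
      filter_upwards [eventually_ne_nhds hrne] with r' hr'
      exact (hR1 r' hr').deriv
    rw [hev.deriv_eq]
    exact hR2.deriv
  rw [e1, e2]
  simp only [outgoingMultipole]
  rw [Finset.mul_sum, ← Finset.sum_sub_distrib, ← Finset.sum_add_distrib]
  have hXY : ∀ k < ℓ,
      iteratedDeriv (ℓ - (k+1) + 1) f (t - r) = iteratedDeriv (ℓ - k) f (t - r) := by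
    intro k hk
    have h : ℓ - (k+1) + 1 = ℓ - k := by omega
    rw [h]
  have final := sumAB ℓ (fun k => iteratedDeriv (ℓ - k) f (t - r))
    (fun k => iteratedDeriv (ℓ - k + 1) f (t - r)) hXY (r:ℂ)
  rw [← final]
  apply Finset.sum_congr rfl
  intro k hk
  simp only [div_eq_mul_inv, ← inv_pow]
  push_cast
  ring
end

section
/- Let ℓ ≥ 1 and let b_1, …, b_ℓ be distinct nonzero complex numbers with ∏_{j=1}^{ℓ}(z − b_j) = z^ℓ W_ℓ(z) for all z ≠ 0, and let r1, r2 > 0. Then for every s ∈ ℂ with s ≠ 0, W_ℓ(s r1) ≠ 0, and s ≠ b_j/r1 for all j, the teleportation kernel admits the sum-of-poles representation Φ̂_ℓ(s, r1, r2) = Σ_{j=1}^{ℓ} a_j(r1, r2) / (s − b_j/r1), where a_j(r1, r2) = r1^{ℓ−1} · ∏_{k=1}^{ℓ} (b_j/r1 − b_k/r2) / ∏_{k=1, k≠j}^{ℓ} (b_j − b_k). -/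
/-- `W_ℓ(z) = ∑_{k=0}^ℓ c_{ℓk} z^{-k}`. -/
noncomputable def Wl (ℓ : ℕ) (z : ℂ) : ℂ :=
  ∑ k ∈ Finset.range (ℓ + 1), besselCoeff ℓ k / z ^ k


open Finset Polynomial

lemma lagrange_key (n : ℕ) (hn : 1 ≤ n) (c d : Fin n → ℂ)
    (hc : Function.Injective c) (s : ℂ) :
    (∏ j, (s - d j)) - ∏ j, (s - c j)
      = ∑ j, ((∏ k, (c j - d k)) / ∏ k ∈ univ.erase j, (c j - c k))
          * ∏ k ∈ univ.erase j, (s - c k) := by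
  set a : Fin n → ℂ := fun j => (∏ k, (c j - d k)) / ∏ k ∈ univ.erase j, (c j - c k) with ha
  set p : ℂ[X] := ((∏ j, (X - C (d j))) - ∏ j, (X - C (c j)))
      - ∑ j, C (a j) * ∏ k ∈ univ.erase j, (X - C (c k)) with hp
  have hcc : ∀ j, (∏ k ∈ univ.erase j, (c j - c k)) ≠ 0 := by
    intro j
    refine Finset.prod_ne_zero_iff.mpr fun k hk => sub_ne_zero.mpr ?_
    exact fun h => (mem_erase.mp hk).1 (hc h).symm
  have heval : ∀ i, p.eval (c i) = 0 := by
    intro i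
    have h1 : (∏ j, (X - C (c j)) : ℂ[X]).eval (c i) = 0 := by
      rw [eval_prod]
      exact Finset.prod_eq_zero (mem_univ i) (by simp)
    have h2 : (∑ j, C (a j) * ∏ k ∈ univ.erase j, (X - C (c k)) : ℂ[X]).eval (c i)
        = ∏ k, (c i - d k) := by
      rw [eval_finset_sum]
      rw [Finset.sum_eq_single i]
      · simp only [eval_mul, eval_C, eval_prod, eval_sub, eval_X]
        rw [ha]
        exact div_mul_cancel₀ _ (hcc i)
      · intro j _ hji
        simp only [eval_mul, eval_C, eval_prod, eval_sub, eval_X]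
        refine mul_eq_zero_of_right _ (Finset.prod_eq_zero (mem_erase.mpr ⟨hji.symm, mem_univ i⟩) ?_)
        simp
      · simp
    simp only [hp, eval_sub, eval_prod, eval_X, eval_C, h2]
    rw [eval_prod] at h1
    simp only [eval_sub, eval_X, eval_C] at h1 ⊢
    rw [h1]; ring
  have hdeg : p.degree < n := by
    have hA : (∏ j, (X - C (d j)) : ℂ[X]).Monic := monic_prod_of_monic _ _ fun j _ => monic_X_sub_C _
    have hB : (∏ j, (X - C (c j)) : ℂ[X]).Monic := monic_prod_of_monic _ _ fun j _ => monic_X_sub_C _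
    have hAd : (∏ j, (X - C (d j)) : ℂ[X]).degree = n := by
      rw [degree_prod]; simp [degree_X_sub_C]
    have hBd : (∏ j, (X - C (c j)) : ℂ[X]).degree = n := by
      rw [degree_prod]; simp [degree_X_sub_C]
    have hsub : ((∏ j, (X - C (d j))) - ∏ j, (X - C (c j)) : ℂ[X]).degree < n := by
      by_cases h : ((∏ j, (X - C (d j))) - ∏ j, (X - C (c j)) : ℂ[X]) = 0
      · rw [h, degree_zero]; exact_mod_cast WithBot.bot_lt_coe _
      · rw [← hAd]
        exact degree_sub_lt (hAd.trans hBd.symm) hA.ne_zero (hA.leadingCoeff.trans hB.leadingCoeff.symm)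
    have hsum : (∑ j, C (a j) * ∏ k ∈ univ.erase j, (X - C (c k)) : ℂ[X]).degree < n := by
      refine lt_of_le_of_lt (degree_sum_le _ _) ?_
      rw [Finset.sup_lt_iff (by exact_mod_cast WithBot.bot_lt_coe n)]
      intro j _
      refine lt_of_le_of_lt (degree_mul_le _ _) ?_
      have : (∏ k ∈ univ.erase j, (X - C (c k)) : ℂ[X]).degree = (n - 1 : ℕ) := by
        rw [degree_prod]
        simp only [degree_X_sub_C, Finset.sum_const, nsmul_eq_mul, mul_one]
        rw [Finset.card_erase_of_mem (mem_univ j), card_univ, Fintype.card_fin]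
      rw [this]
      calc (C (a j)).degree + ((n:ℕ) - 1 : ℕ) ≤ 0 + ((n:ℕ) - 1 : ℕ) := by
            exact add_le_add degree_C_le le_rfl
        _ = ((n - 1 : ℕ) : WithBot ℕ) := by rw [zero_add]
        _ < n := by exact_mod_cast Nat.sub_lt hn one_pos
    exact lt_of_le_of_lt (degree_sub_le _ _) (max_lt hsub hsum)
  have hpz : p = 0 := by
    refine Polynomial.eq_zero_of_natDegree_lt_card_of_eval_eq_zero p hc heval ?_
    rw [Fintype.card_fin]
    by_cases h : p = 0
    · simpa [h] using (show 0 < n by omega)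
    · exact natDegree_lt_iff_degree_lt h |>.mpr (by simpa using hdeg)
  have := congrArg (Polynomial.eval s) hpz
  simp only [hp, eval_sub, eval_prod, eval_finset_sum, eval_mul, eval_C, eval_X, eval_zero] at this
  linear_combination this
/-- Sum-of-poles representation of the frequency-domain teleportation kernel
`Φ̂_ℓ(s, r1, r2) = -1 + W_ℓ(s r2)/W_ℓ(s r1)`, with residues
`a_j(r1,r2) = r1^{ℓ-1} ∏_k (b_j/r1 - b_k/r2) / ∏_{k≠j} (b_j - b_k)`. -/
theorem stmt_2 (ℓ : ℕ) (hℓ : 1 ≤ ℓ) (b : Fin ℓ → ℂ)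
    (hinj : Function.Injective b) (hb0 : ∀ j, b j ≠ 0)
    (hprod : ∀ z : ℂ, z ≠ 0 → ∏ j, (z - b j) = z ^ ℓ * Wl ℓ z)
    (r1 r2 : ℝ) (hr1 : 0 < r1) (hr2 : 0 < r2)
    (s : ℂ) (hs : s ≠ 0) (hW : Wl ℓ (s * r1) ≠ 0) (hsp : ∀ j, s ≠ b j / r1) :
    -1 + Wl ℓ (s * r2) / Wl ℓ (s * r1)
      = ∑ j, ((r1 : ℂ) ^ (ℓ - 1) *
            (∏ k, (b j / r1 - b k / r2)) / ∏ k ∈ Finset.univ.erase j, (b j - b k))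
          / (s - b j / r1) := by
  have hr1' : (r1 : ℂ) ≠ 0 := by exact_mod_cast hr1.ne'
  have hr2' : (r2 : ℂ) ≠ 0 := by exact_mod_cast hr2.ne'
  set c : Fin ℓ → ℂ := fun j => b j / r1 with hcdef
  set d : Fin ℓ → ℂ := fun j => b j / r2 with hddef
  have hcinj : Function.Injective c := fun i j h => hinj (by
    exact (div_left_inj' hr1').mp h)
  have hsc : ∀ j, s - c j ≠ 0 := fun j => sub_ne_zero.mpr (hsp j)
  have hPc : (∏ j, (s - c j)) ≠ 0 := Finset.prod_ne_zero_iff.mpr fun j _ => hsc j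
  have hsl : (s : ℂ) ^ ℓ ≠ 0 := pow_ne_zero _ hs
  -- Wl values
  have hW1 : Wl ℓ (s * r1) = (∏ j, (s - c j)) / s ^ ℓ := by
    have h := hprod (s * r1) (mul_ne_zero hs hr1')
    have hL : (∏ j, (s * r1 - b j)) = r1 ^ ℓ * ∏ j, (s - c j) := by
      have : (∏ j, (s * (r1:ℂ) - b j)) = ∏ j, ((r1:ℂ) * (s - c j)) :=
        Finset.prod_congr rfl fun j _ => by simp only [hcdef]; rw [mul_sub, mul_div_assoc', mul_div_cancel_left₀ _ hr1']; ring
      rw [this, Finset.prod_mul_distrib, Finset.prod_const, card_univ, Fintype.card_fin]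
    rw [hL, mul_pow] at h
    have h2 : (∏ j, (s - c j)) = s ^ ℓ * Wl ℓ (s * r1) :=
      mul_left_cancel₀ (pow_ne_zero ℓ hr1') (by linear_combination h)
    rw [h2, mul_div_cancel_left₀ _ hsl]
  have hW2 : Wl ℓ (s * r2) = (∏ j, (s - d j)) / s ^ ℓ := by
    have h := hprod (s * r2) (mul_ne_zero hs hr2')
    have hL : (∏ j, (s * r2 - b j)) = r2 ^ ℓ * ∏ j, (s - d j) := by
      have : (∏ j, (s * (r2:ℂ) - b j)) = ∏ j, ((r2:ℂ) * (s - d j)) :=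
        Finset.prod_congr rfl fun j _ => by simp only [hddef]; rw [mul_sub, mul_div_assoc', mul_div_cancel_left₀ _ hr2']; ring
      rw [this, Finset.prod_mul_distrib, Finset.prod_const, card_univ, Fintype.card_fin]
    rw [hL, mul_pow] at h
    have h2 : (∏ j, (s - d j)) = s ^ ℓ * Wl ℓ (s * r2) :=
      mul_left_cancel₀ (pow_ne_zero ℓ hr2') (by linear_combination h)
    rw [h2, mul_div_cancel_left₀ _ hsl]
  -- residues in terms of c, d
  have hres : ∀ j, (r1 : ℂ) ^ (ℓ - 1) *
        (∏ k, (b j / r1 - b k / r2)) / ∏ k ∈ Finset.univ.erase j, (b j - b k)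
      = (∏ k, (c j - d k)) / ∏ k ∈ Finset.univ.erase j, (c j - c k) := by
    intro j
    have hden : (∏ k ∈ Finset.univ.erase j, (b j - b k))
        = r1 ^ (ℓ - 1) * ∏ k ∈ Finset.univ.erase j, (c j - c k) := by
      have : ∀ k ∈ Finset.univ.erase j, (b j - b k) = r1 * (c j - c k) := by
        intro k _; simp only [hcdef]; rw [mul_sub, mul_div_assoc', mul_div_assoc', mul_div_cancel_left₀ _ hr1', mul_div_cancel_left₀ _ hr1']
      rw [Finset.prod_congr rfl this, Finset.prod_mul_distrib, Finset.prod_const,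
        Finset.card_erase_of_mem (mem_univ j), card_univ, Fintype.card_fin]
    rw [hden]
    have hccj : (∏ k ∈ Finset.univ.erase j, (c j - c k)) ≠ 0 :=
      Finset.prod_ne_zero_iff.mpr fun k hk => sub_ne_zero.mpr
        (fun h => (mem_erase.mp hk).1 (hcinj h).symm)
    have hr1p : (r1 : ℂ) ^ (ℓ - 1) ≠ 0 := pow_ne_zero _ hr1'
    exact (mul_div_mul_left _ _ hr1p)
  rw [hW1, hW2]
  have key := lagrange_key ℓ hℓ c d hcinj s
  calc -1 + (∏ j, (s - d j)) / s ^ ℓ / ((∏ j, (s - c j)) / s ^ ℓ)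
      = ((∏ j, (s - d j)) - ∏ j, (s - c j)) / ∏ j, (s - c j) := by
        field_simp
        ring
    _ = (∑ j, ((∏ k, (c j - d k)) / ∏ k ∈ univ.erase j, (c j - c k))
          * ∏ k ∈ univ.erase j, (s - c k)) / ∏ j, (s - c j) := by rw [key]
    _ = ∑ j, ((r1 : ℂ) ^ (ℓ - 1) *
            (∏ k, (b j / r1 - b k / r2)) / ∏ k ∈ Finset.univ.erase j, (b j - b k))
          / (s - b j / r1) := by
        rw [Finset.sum_div]
        refine Finset.sum_congr rfl fun j _ => ?_
        have hsj : s - b j / (r1:ℂ) ≠ 0 := sub_ne_zero.mpr (hsp j)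
        rw [hres j, div_eq_div_iff hPc hsj,
          ← Finset.mul_prod_erase univ (fun k => s - c k) (mem_univ j)]
        simp only [hcdef]
        ring
end

section
/- Let ℓ ≥ 1, let b_1, …, b_ℓ be distinct nonzero complex numbers with ∏_{j=1}^{ℓ}(z − b_j) = z^ℓ W_ℓ(z) for all z ≠ 0, let r1, r2 > 0, and let a_j(r1, r2) = r1^{ℓ−1} · ∏_{k=1}^{ℓ} (b_j/r1 − b_k/r2) / ∏_{k=1, k≠j}^{ℓ} (b_j − b_k). Then the time-domain teleportation kernel Φ_ℓ(t, r1, r2) = Σ_{j=1}^{ℓ} a_j(r1, r2) · e^{b_j t / r1} is real-valued: its imaginary part vanishes for every real t. -/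
/-- The residues `a_j(r1,r2) = r1^{ℓ-1} ∏_k (b_j/r1 - b_k/r2) / ∏_{k≠j}(b_j - b_k)`. -/
noncomputable def teleResidue (ℓ : ℕ) (b : Fin ℓ → ℂ) (j : Fin ℓ) (r1 r2 : ℝ) : ℂ :=
  (r1 : ℂ) ^ (ℓ - 1) *
    (∏ k, (b j / r1 - b k / r2)) / ∏ k ∈ Finset.univ.erase j, (b j - b k)

/-- The time-domain teleportation kernel
`Φ_ℓ(t,r1,r2) = ∑_j a_j(r1,r2) e^{b_j t/r1}` is real-valued. -/
theorem stmt_11 (ℓ : ℕ) (hℓ : 1 ≤ ℓ) (b : Fin ℓ → ℂ)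
    (hinj : Function.Injective b) (hb0 : ∀ j, b j ≠ 0)
    (hprod : ∀ z : ℂ, z ≠ 0 → ∏ j, (z - b j) = z ^ ℓ * Wl ℓ z)
    (r1 r2 : ℝ) (hr1 : 0 < r1) (hr2 : 0 < r2) :
    ∀ t : ℝ,
      (∑ j, teleResidue ℓ b j r1 r2 * Complex.exp (b j * t / r1)).im = 0 := by
  intro t
  have hW : ∀ z : ℂ, (starRingEnd ℂ) (Wl ℓ z) = Wl ℓ ((starRingEnd ℂ) z) := by
    intro z
    simp only [Wl, map_sum, map_div₀, map_pow, besselCoeff, map_mul, map_ofNat,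
      Complex.conj_natCast]
  have hroot : ∀ j, ∃ k, (starRingEnd ℂ) (b j) = b k := by
    intro j
    have h1 : ∏ k, (b j - b k) = 0 :=
      Finset.prod_eq_zero (Finset.mem_univ j) (by ring)
    have h2 : ((b j) ^ ℓ * Wl ℓ (b j)) = 0 := by
      rw [← hprod (b j) (hb0 j)]; exact h1
    have h3 : ∏ k, ((starRingEnd ℂ) (b j) - b k) = 0 := by
      rw [hprod _ (by simpa using hb0 j)]
      have := congrArg (starRingEnd ℂ) h2
      simpa [map_mul, map_pow, hW] using this
    obtain ⟨k, _, hk⟩ := Finset.prod_eq_zero_iff.mp h3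
    exact ⟨k, sub_eq_zero.mp hk⟩
  classical
  let σ : Fin ℓ → Fin ℓ := fun j => (hroot j).choose
  have hσ : ∀ j, (starRingEnd ℂ) (b j) = b (σ j) := fun j => (hroot j).choose_spec
  have hσinj : Function.Injective σ := by
    intro i j h
    apply hinj
    have := congrArg (starRingEnd ℂ) (congrArg b h)
    apply (starRingEnd ℂ).injective
    rw [hσ i, hσ j, h]
  have hbij : Function.Bijective σ := Finite.injective_iff_bijective.mp hσinj
  have himg : ∀ j, (Finset.univ.erase j).image σ = Finset.univ.erase (σ j) := by
    intro j
    ext k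
    simp only [Finset.mem_image, Finset.mem_erase, Finset.mem_univ, and_true]
    constructor
    · rintro ⟨a, ha, rfl⟩
      exact fun h => ha (hσinj h)
    · intro hk
      obtain ⟨a, rfl⟩ := hbij.2 k
      exact ⟨a, fun h => hk (by rw [h]), rfl⟩
  have key : (starRingEnd ℂ)
      (∑ j, teleResidue ℓ b j r1 r2 * Complex.exp (b j * t / r1)) =
      ∑ j, teleResidue ℓ b j r1 r2 * Complex.exp (b j * t / r1) := by
    rw [map_sum]
    have hterm : ∀ j, (starRingEnd ℂ)
        (teleResidue ℓ b j r1 r2 * Complex.exp (b j * t / r1)) =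
        teleResidue ℓ b (σ j) r1 r2 * Complex.exp (b (σ j) * t / r1) := by
      intro j
      rw [map_mul]
      congr 1
      · unfold teleResidue
        rw [map_div₀, map_mul, map_prod, map_prod]
        congr 1
        · congr 1
          · simp [Complex.conj_ofReal]
          · have : ∀ k, (starRingEnd ℂ) (b j / r1 - b k / r2) =
                b (σ j) / r1 - b (σ k) / r2 := by
              intro k
              rw [map_sub, map_div₀, map_div₀, hσ, hσ, Complex.conj_ofReal,
                Complex.conj_ofReal]
            rw [Finset.prod_congr rfl (fun k _ => this k)]
            exact (Equiv.ofBijective σ hbij).prod_comp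
              (fun k => b (σ j) / r1 - b k / r2)
        · have : ∀ k, (starRingEnd ℂ) (b j - b k) = b (σ j) - b (σ k) := by
            intro k; rw [map_sub, hσ, hσ]
          rw [Finset.prod_congr rfl (fun k _ => this k),
            show (Finset.univ.erase (σ j)) = (Finset.univ.erase j).image σ from
              (himg j).symm,
            Finset.prod_image (fun a _ c _ h => hσinj h)]
      · rw [← Complex.exp_conj]
        congr 1
        rw [map_div₀, map_mul, hσ, Complex.conj_ofReal, Complex.conj_ofReal]
    rw [Finset.sum_congr rfl (fun j _ => hterm j)]
    exact (Equiv.ofBijective σ hbij).sum_comp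
      (fun j => teleResidue ℓ b j r1 r2 * Complex.exp (b j * t / r1))
  exact Complex.conj_eq_iff_im.mp key
end

section
/- Let ℓ ≥ 1, let b_1, …, b_ℓ be distinct nonzero complex numbers with ∏_{j=1}^{ℓ}(z − b_j) = z^ℓ W_ℓ(z) for all z ≠ 0, let r1, r2 > 0, and let a_j(r1, r2) = r1^{ℓ−1} · ∏_{k=1}^{ℓ} (b_j/r1 − b_k/r2) / ∏_{k=1, k≠j}^{ℓ} (b_j − b_k). Then the sum of the residues, which equals the time-domain teleportation kernel at t = 0, is Σ_{j=1}^{ℓ} a_j(r1, r2) = (1/r1) · (ℓ(ℓ+1)/2) · (r1/r2 − 1). -/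
open Polynomial Finset in
/-- Lagrange divided-difference: for `g` of degree `< n+1`, the top coefficient equals
the weighted sum of values at `n+1` distinct nodes. -/
lemma lagrange_coeff_sum {n : ℕ} (b : Fin (n + 1) → ℂ) (hinj : Function.Injective b)
    (g : ℂ[X]) (hdeg : g.degree < ((n + 1 : ℕ) : WithBot ℕ)) :
    g.coeff n = ∑ j, g.eval (b j) * (∏ k ∈ univ.erase j, (b j - b k))⁻¹ := by
  have hvs : Set.InjOn b (univ : Finset (Fin (n + 1))) := fun x _ y _ h => hinj h
  have hcard : #(univ : Finset (Fin (n + 1))) = n + 1 := by simp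
  have h := Lagrange.eq_interpolate hvs (by rwa [hcard])
  conv_lhs => rw [h]
  rw [Lagrange.interpolate_apply, Polynomial.finset_sum_coeff]
  refine Finset.sum_congr rfl fun j _ => ?_
  rw [Polynomial.coeff_C_mul]
  congr 1
  have hbasis : Lagrange.basis univ b j
      = C (∏ k ∈ univ.erase j, (b j - b k)⁻¹) * ∏ k ∈ univ.erase j, (X - C (b k)) := by
    rw [Lagrange.basis]
    simp only [Lagrange.basisDivisor]
    rw [Finset.prod_mul_distrib, map_prod]
  have hmon : (∏ k ∈ univ.erase j, (X - C (b k))).Monic :=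
    monic_prod_of_monic _ _ fun k _ => monic_X_sub_C _
  have hnd : (∏ k ∈ univ.erase j, (X - C (b k))).natDegree = n := by
    rw [Polynomial.natDegree_prod_of_monic _ _ fun k _ => monic_X_sub_C _]
    simp [Finset.card_erase_of_mem]
  have hcoeff : (∏ k ∈ univ.erase j, (X - C (b k))).coeff n = 1 := by
    have := hmon.coeff_natDegree
    rwa [hnd] at this
  rw [hbasis, Polynomial.coeff_C_mul, hcoeff, mul_one, Finset.prod_inv_distrib]

/-- The sum of the residues, i.e. the time-domain teleportation kernel at `t = 0`,
equals `(1/r1) (ℓ(ℓ+1)/2) (r1/r2 - 1)`. -/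
theorem stmt_13 (ℓ : ℕ) (hℓ : 1 ≤ ℓ) (b : Fin ℓ → ℂ)
    (hinj : Function.Injective b) (hb0 : ∀ j, b j ≠ 0)
    (hprod : ∀ z : ℂ, z ≠ 0 → ∏ j, (z - b j) = z ^ ℓ * Wl ℓ z)
    (r1 r2 : ℝ) (hr1 : 0 < r1) (hr2 : 0 < r2) :
    ∑ j, teleResidue ℓ b j r1 r2
      = (1 / (r1 : ℂ)) * ((ℓ : ℂ) * ((ℓ : ℂ) + 1) / 2) * ((r1 : ℂ) / (r2 : ℂ) - 1) := by
  classical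
  obtain ⟨n, rfl⟩ : ∃ n, ℓ = n + 1 := ⟨ℓ - 1, (Nat.succ_pred_eq_of_pos hℓ).symm⟩
  have hr1' : (r1 : ℂ) ≠ 0 := by exact_mod_cast hr1.ne'
  have hr2' : (r2 : ℂ) ≠ 0 := by exact_mod_cast hr2.ne'
  set c : ℂ := (r2 : ℂ) / (r1 : ℂ) with hc
  have hc0 : c ≠ 0 := div_ne_zero hr2' hr1'
  -- The polynomial identity in expanded form
  have hP : ∀ z : ℂ, z ≠ 0 →
      ∑ k ∈ Finset.range (n + 2), besselCoeff (n + 1) k * z ^ (n + 1 - k) = ∏ j, (z - b j) := by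
    intro z hz
    rw [hprod z hz, Wl, Finset.mul_sum]
    refine Finset.sum_congr rfl fun k hk => ?_
    rw [Finset.mem_range] at hk
    rw [pow_sub₀ z hz (by omega : k ≤ n + 1), div_eq_mul_inv]
    ring
  -- The auxiliary polynomial G
  set G : Polynomial ℂ :=
    ∑ k ∈ Finset.range (n + 2),
      Polynomial.C (besselCoeff (n + 1) k * (c ^ (n + 1 - k) - c ^ (n + 1))) *
        Polynomial.X ^ (n + 1 - k) with hG
  have hGeval : ∀ j, G.eval (b j) = ∏ k, (c * b j - b k) := by
    intro j
    have h1 : ∑ k ∈ Finset.range (n + 2), besselCoeff (n + 1) k * (b j) ^ (n + 1 - k) = 0 := by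
      rw [hP (b j) (hb0 j)]
      exact Finset.prod_eq_zero (Finset.mem_univ j) (sub_self _)
    have h2 := hP (c * b j) (mul_ne_zero hc0 (hb0 j))
    rw [hG]
    simp only [Polynomial.eval_finset_sum, Polynomial.eval_mul, Polynomial.eval_C,
      Polynomial.eval_pow, Polynomial.eval_X]
    have expand : ∑ k ∈ Finset.range (n + 2),
        besselCoeff (n + 1) k * (c ^ (n + 1 - k) - c ^ (n + 1)) * (b j) ^ (n + 1 - k)
        = (∑ k ∈ Finset.range (n + 2), besselCoeff (n + 1) k * (c * b j) ^ (n + 1 - k))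
          - c ^ (n + 1) * ∑ k ∈ Finset.range (n + 2), besselCoeff (n + 1) k * (b j) ^ (n + 1 - k) := by
      rw [Finset.mul_sum, ← Finset.sum_sub_distrib]
      exact Finset.sum_congr rfl fun k _ => by rw [mul_pow]; ring
    rw [expand, h1, h2, mul_zero, sub_zero]
  have hGdeg : G.degree < ((n + 1 : ℕ) : WithBot ℕ) := by
    apply lt_of_le_of_lt (Polynomial.degree_sum_le _ _)
    rw [Finset.sup_lt_iff (by exact WithBot.bot_lt_coe _)]
    intro k hk
    rw [Finset.mem_range] at hk
    rcases Nat.eq_zero_or_pos k with rfl | hkpos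
    · simp only [Nat.sub_zero, sub_self, mul_zero, map_zero, zero_mul, Polynomial.degree_zero]
      exact WithBot.bot_lt_coe _
    · apply lt_of_le_of_lt (Polynomial.degree_C_mul_X_pow_le _ _)
      exact_mod_cast Nat.sub_lt (by omega) hkpos
  have hGcoeff : G.coeff n = besselCoeff (n + 1) 1 * (c ^ n - c ^ (n + 1)) := by
    rw [hG, Polynomial.finset_sum_coeff, Finset.sum_eq_single 1]
    · rw [Polynomial.coeff_C_mul, Polynomial.coeff_X_pow, Nat.add_sub_cancel, if_pos rfl,
        mul_one]
    · intro k hk hk1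
      rw [Finset.mem_range] at hk
      rcases Nat.eq_zero_or_pos k with rfl | hkpos
      · simp only [Nat.sub_zero, sub_self, mul_zero, map_zero, zero_mul, Polynomial.coeff_zero]
      · have hne : n + 1 - k ≠ n := by omega
        rw [Polynomial.coeff_C_mul, Polynomial.coeff_X_pow, if_neg (Ne.symm hne), mul_zero]
    · intro h
      exact absurd (Finset.mem_range.mpr (by omega)) h
  have key := lagrange_coeff_sum b hinj G hGdeg
  -- rewrite each residue
  have hres : ∀ j, teleResidue (n + 1) b j r1 r2
      = (r1 : ℂ) ^ n * ((r2 : ℂ) ^ (n + 1))⁻¹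
        * (G.eval (b j) * (∏ k ∈ Finset.univ.erase j, (b j - b k))⁻¹) := by
    intro j
    rw [teleResidue, hGeval j]
    have hfac : (∏ k, (b j / (r1 : ℂ) - b k / (r2 : ℂ)))
        = ((r2 : ℂ) ^ (n + 1))⁻¹ * ∏ k, (c * b j - b k) := by
      have hstep : ∀ k : Fin (n + 1), b j / (r1 : ℂ) - b k / (r2 : ℂ)
          = (c * b j - b k) * (r2 : ℂ)⁻¹ := by
        intro k
        field_simp [hc]
        rw [hc]
        linear_combination (-(b j * (r2 : ℂ))) * mul_inv_cancel₀ hr1'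
      rw [Finset.prod_congr rfl fun k _ => hstep k, Finset.prod_mul_distrib,
        Finset.prod_const, Finset.card_univ, Fintype.card_fin, ← inv_pow]
      ring
    rw [hfac, Nat.add_sub_cancel, div_eq_mul_inv]
    ring
  rw [Finset.sum_congr rfl fun j _ => hres j, ← Finset.mul_sum, ← key, hGcoeff]
  -- evaluate besselCoeff (n+1) 1
  have hB : besselCoeff (n + 1) 1 = ((n : ℂ) + 1) * ((n : ℂ) + 2) / 2 := by
    rw [besselCoeff]
    have hfact : (n + 1 + 1).factorial = (n + 2) * ((n + 1) * n.factorial) := by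
      rw [Nat.factorial_succ, Nat.factorial_succ]
    have hf : ((n.factorial : ℂ)) ≠ 0 := Nat.cast_ne_zero.mpr n.factorial_ne_zero
    rw [hfact]
    simp only [Nat.add_sub_cancel, Nat.factorial_one]
    push_cast
    field_simp
  rw [hB]
  push_cast
  have hr2n : ((r2 : ℂ)) ^ n ≠ 0 := pow_ne_zero _ hr2'
  have h3 : (r1 : ℂ) ^ n * c ^ n = (r2 : ℂ) ^ n := by
    rw [hc, div_pow]
    field_simp
  have h4 : (r2 : ℂ) ^ n * ((r2 : ℂ) ^ (n + 1))⁻¹ = (r2 : ℂ)⁻¹ := by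
    rw [pow_succ, mul_inv, ← mul_assoc, mul_inv_cancel₀ hr2n, one_mul]
  calc (r1 : ℂ) ^ n * ((r2 : ℂ) ^ (n + 1))⁻¹
        * (((n : ℂ) + 1) * ((n : ℂ) + 2) / 2 * (c ^ n - c ^ (n + 1)))
      = ((n : ℂ) + 1) * ((n : ℂ) + 2) / 2
          * (((r1 : ℂ) ^ n * c ^ n) * (((r2 : ℂ) ^ (n + 1))⁻¹ * (1 - c))) := by ring
    _ = ((n : ℂ) + 1) * ((n : ℂ) + 2) / 2 * ((r2 : ℂ)⁻¹ * (1 - c)) := by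
        rw [h3, show (r2 : ℂ) ^ n * (((r2 : ℂ) ^ (n + 1))⁻¹ * (1 - c))
            = ((r2 : ℂ) ^ n * ((r2 : ℂ) ^ (n + 1))⁻¹) * (1 - c) from (mul_assoc _ _ _).symm, h4]
    _ = 1 / (r1 : ℂ) * (((n : ℂ) + 1) * (((n : ℂ) + 1) + 1) / 2) * ((r1 : ℂ) / (r2 : ℂ) - 1) := by
        rw [hc]
        field_simp
        ring
end

section
/- Let n, p ≥ 1 and let D_1, …, D_p be closed disks in ℂ, where D_k has center c_k and radius r_k > 0. Let q_1, …, q_n ∈ ℂ and z_1, …, z_n ∈ ⋃_{k=1}^{p} D_k, and set f(z) = Σ_{j=1}^{n} q_j/(z − z_j). Then there exists a constant K > 0, independent of a and of m, such that for every integer m ≥ 1 and every real a > 1 there exist complex numbers γ_1, …, γ_{m·p} and β_1, …, β_{m·p} (pole locations) for which the function g(z) = Σ_{i=1}^{m·p} γ_i/(z − β_i) satisfies, for every z in the region 𝒰_a = { z ∈ ℂ : Re(z − c_k) ≥ a·r_k for all 1 ≤ k ≤ p }, the bound |f(z) − g(z)| ≤ K·(a² + 1)/((a^m − 1)(a − 1)²)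 · | Σ_{j=1}^{n} |q_j|/(z − z_j) |. -/
open Finset

lemma pf_aux (t : ℕ → ℂ) :
    ∀ m : ℕ, 1 ≤ m → (∀ i < m, ∀ j < m, t i = t j → i = j) →
    ∃ d : ℕ → ℂ, ∀ w : ℂ, (∀ i < m, w ≠ t i) →
      (∏ i ∈ Finset.range m, (w - t i))⁻¹ = ∑ i ∈ Finset.range m, d i / (w - t i) := by
  refine Nat.le_induction ?_ ?_
  · intro _
    refine ⟨fun _ => 1, fun w hw => ?_⟩
    rw [Finset.prod_range_one, Finset.sum_range_one, inv_eq_one_div]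
  · intro m hm IH hinj
    obtain ⟨d, hd⟩ := IH (fun i hi j hj h => hinj i (by omega) j (by omega) h)
    refine ⟨fun i => if i < m then d i / (t i - t m) else
      -∑ i ∈ Finset.range m, d i / (t i - t m), fun w hw => ?_⟩
    have hw' : ∀ i < m, w ≠ t i := fun i hi => hw i (by omega)
    have hwm : w - t m ≠ 0 := sub_ne_zero.2 (hw m (by omega))
    have htm : ∀ i < m, t i - t m ≠ 0 := by
      intro i hi
      refine sub_ne_zero.2 fun h => ?_
      have := hinj i (by omega) m (by omega) h
      omega
    rw [Finset.prod_range_succ, mul_inv, hd w hw', Finset.sum_mul]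
    rw [Finset.sum_range_succ]
    simp only [lt_self_iff_false, if_false]
    have : ∀ i ∈ Finset.range m,
        d i / (w - t i) * (w - t m)⁻¹
          = (if i < m then d i / (t i - t m) else
              -∑ i ∈ Finset.range m, d i / (t i - t m)) / (w - t i)
            - (d i / (t i - t m)) / (w - t m) := by
      intro i hi
      rw [Finset.mem_range] at hi
      rw [if_pos hi]
      have h1 := sub_ne_zero.2 (hw' i hi)
      have h2 := htm i hi
      field_simp
      ring
    rw [Finset.sum_congr rfl this, Finset.sum_sub_distrib]
    rw [neg_div, Finset.sum_div]
    ring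

lemma newton_aux (t : ℕ → ℂ) (zz : ℂ) :
    ∀ m : ℕ, (∀ i < m, ∀ j < m, t i = t j → i = j) →
    ∃ γ : ℕ → ℂ, ∀ w : ℂ, (∀ i < m, w ≠ t i) → w ≠ zz →
      1 / (w - zz) = (∑ i ∈ Finset.range m, γ i / (w - t i)) +
        (∏ i ∈ Finset.range m, (zz - t i)) /
          ((∏ i ∈ Finset.range m, (w - t i)) * (w - zz)) := by
  intro m
  induction m with
  | zero =>
    intro _
    exact ⟨fun _ => 0, fun w hw hwz => by simp [one_div]⟩
  | succ m IH =>
    intro hinj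
    obtain ⟨γ, hγ⟩ := IH (fun i hi j hj h => hinj i (by omega) j (by omega) h)
    obtain ⟨d, hd⟩ := pf_aux t (m + 1) (by omega) hinj
    set Az := ∏ i ∈ Finset.range m, (zz - t i) with hAz
    refine ⟨fun i => (if i < m then γ i else 0) + Az * d i, fun w hw hwz => ?_⟩
    have hw' : ∀ i < m, w ≠ t i := fun i hi => hw i (by omega)
    have hA : (∏ i ∈ Finset.range m, (w - t i)) ≠ 0 := by
      refine Finset.prod_ne_zero_iff.2 fun i hi => ?_
      exact sub_ne_zero.2 (hw' i (Finset.mem_range.1 hi))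
    have hu : w - t m ≠ 0 := sub_ne_zero.2 (hw m (by omega))
    have hv : w - zz ≠ 0 := sub_ne_zero.2 hwz
    have key : Az / ((∏ i ∈ Finset.range m, (w - t i)) * (w - zz))
        = Az * ((∏ i ∈ Finset.range (m+1), (w - t i)))⁻¹ +
          (∏ i ∈ Finset.range (m+1), (zz - t i)) /
            ((∏ i ∈ Finset.range (m+1), (w - t i)) * (w - zz)) := by
      rw [Finset.prod_range_succ, Finset.prod_range_succ (f := fun i => (zz - t i)), ← hAz]
      field_simp
      ring
    calc 1 / (w - zz)
        = (∑ i ∈ Finset.range m, γ i / (w - t i)) +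
            Az / ((∏ i ∈ Finset.range m, (w - t i)) * (w - zz)) := hγ w hw' hwz
      _ = (∑ i ∈ Finset.range m, γ i / (w - t i)) +
            (Az * ((∏ i ∈ Finset.range (m+1), (w - t i)))⁻¹ +
              (∏ i ∈ Finset.range (m+1), (zz - t i)) /
                ((∏ i ∈ Finset.range (m+1), (w - t i)) * (w - zz))) := by rw [key]
      _ = (∑ i ∈ Finset.range (m+1), ((if i < m then γ i else 0) + Az * d i) / (w - t i)) +
            (∏ i ∈ Finset.range (m+1), (zz - t i)) /
              ((∏ i ∈ Finset.range (m+1), (w - t i)) * (w - zz)) := by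
          rw [hd w hw, Finset.mul_sum]
          have e1 : ∀ i ∈ Finset.range (m+1),
              ((if i < m then γ i else 0) + Az * d i) / (w - t i)
                = (if i < m then γ i else 0) / (w - t i) + Az * (d i / (w - t i)) := by
            intro i hi
            rw [add_div, mul_div_assoc]
          rw [Finset.sum_congr rfl e1, Finset.sum_add_distrib]
          have e2 : ∑ i ∈ Finset.range (m+1), (if i < m then γ i else 0) / (w - t i)
              = ∑ i ∈ Finset.range m, γ i / (w - t i) := by
            rw [Finset.sum_range_succ, if_neg (lt_irrefl m), zero_div, add_zero]
            refine Finset.sum_congr rfl fun i hi => ?_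
            rw [if_pos (Finset.mem_range.1 hi)]
          rw [e2]
          ring

lemma numeric_aux (a r T nz re : ℝ) (m' : ℕ) (ha : 1 < a) (hr : 0 < r)
    (hT : a * r ≤ T) (hnz : nz ≤ T + r) (hre : (a - 1) * r ≤ re) :
    2 * r ^ (m' + 1) * nz ≤
      4 * (a ^ 2 + 1) / ((a ^ (m' + 1) - 1) * (a - 1) ^ 2) * re * T ^ (m' + 1) := by
  have ha0 : (0:ℝ) < a := lt_trans one_pos ha
  have ha1 : (0:ℝ) < a - 1 := by linarith
  have hT0 : (0:ℝ) < T := lt_of_lt_of_le (by positivity) hT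
  have hrT : r ≤ T := le_trans (by nlinarith) hT
  have hpm : 1 < a ^ (m' + 1) := one_lt_pow₀ ha (by omega)
  have hD : (0:ℝ) < (a ^ (m' + 1) - 1) * (a - 1) := mul_pos (by linarith) ha1
  have hD2 : (0:ℝ) < (a ^ (m' + 1) - 1) * (a - 1) ^ 2 :=
    mul_pos (by linarith) (by positivity)
  have hre0 : (0:ℝ) < re := lt_of_lt_of_le (by positivity) hre
  have hrp : (0:ℝ) < r ^ (m' + 1) := pow_pos hr _
  have hap : (0:ℝ) < a ^ m' := pow_pos ha0 m'
  have step1 : 2 * r ^ (m' + 1) * nz ≤ 4 * r ^ (m' + 1) * T := by nlinarith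
  have e1 : (a ^ (m' + 1) - 1) * (a - 1) ≤ a ^ (m' + 1) * a := by nlinarith
  have e2 : (a * r) ^ m' * T ≤ T ^ (m' + 1) := by
    rw [pow_succ]
    exact mul_le_mul_of_nonneg_right (pow_le_pow_left₀ (by positivity) hT m') hT0.le
  have step2 : 4 * r ^ (m' + 1) * T * ((a ^ (m' + 1) - 1) * (a - 1))
      ≤ 4 * (a ^ 2 + 1) * (r * T ^ (m' + 1)) := by
    calc 4 * r ^ (m' + 1) * T * ((a ^ (m' + 1) - 1) * (a - 1))
        ≤ 4 * r ^ (m' + 1) * T * (a ^ (m' + 1) * a) := by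
          apply mul_le_mul_of_nonneg_left e1 (by positivity)
      _ = 4 * (a ^ 2 * a ^ m') * (r ^ (m' + 1) * T) := by rw [pow_succ]; ring
      _ ≤ 4 * ((a ^ 2 + 1) * a ^ m') * (r ^ (m' + 1) * T) := by nlinarith [mul_pos (mul_pos hap hrp) hT0]
      _ = 4 * (a ^ 2 + 1) * (r * ((a * r) ^ m' * T)) := by rw [mul_pow]; ring
      _ ≤ 4 * (a ^ 2 + 1) * (r * T ^ (m' + 1)) := by
          exact mul_le_mul_of_nonneg_left (mul_le_mul_of_nonneg_left e2 hr.le)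
            (by positivity)
  have main : 2 * r ^ (m' + 1) * nz * ((a ^ (m' + 1) - 1) * (a - 1))
      ≤ 4 * (a ^ 2 + 1) * (r * T ^ (m' + 1)) :=
    le_trans (mul_le_mul_of_nonneg_right step1 hD.le) step2
  rw [div_mul_eq_mul_div, div_mul_eq_mul_div, le_div_iff₀ hD2]
  nlinarith [mul_le_mul_of_nonneg_right main ha1.le,
    mul_le_mul_of_nonneg_left hre
      (by positivity : (0:ℝ) ≤ 4 * (a ^ 2 + 1) * T ^ (m' + 1))]

/-- Lemma on compressed sum-of-poles approximations: if `f(z) = ∑_j q_j/(z - z_j)`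
has all pole locations in a union of `p` disks, there is a constant `K > 0`
(independent of `m` and `a`) such that for each `m ≥ 1` and `a > 1` some sum
`g(z) = ∑_{i=1}^{m·p} γ_i/(z - β_i)` of `m·p` simple poles approximates `f` on the
region `𝒰_a = {z : Re(z - c_k) ≥ a r_k for all k}` with error bounded by
`K (a²+1)/((a^m - 1)(a-1)²) |∑_j |q_j|/(z - z_j)|`. -/
theorem stmt_17 (n p : ℕ) (hn : 1 ≤ n) (hp : 1 ≤ p)
    (c : Fin p → ℂ) (r : Fin p → ℝ) (hr : ∀ k, 0 < r k)
    (q : Fin n → ℂ) (z : Fin n → ℂ)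
    (hz : ∀ j, z j ∈ ⋃ k, Metric.closedBall (c k) (r k)) :
    ∃ K > (0 : ℝ), ∀ m : ℕ, 1 ≤ m → ∀ a : ℝ, 1 < a →
      ∃ γ β : Fin (m * p) → ℂ,
        ∀ w : ℂ, (∀ k, a * r k ≤ (w - c k).re) →
          ‖(∑ j, q j / (w - z j)) - ∑ i, γ i / (w - β i)‖
            ≤ K * (a ^ 2 + 1) / ((a ^ m - 1) * (a - 1) ^ 2) *
              ‖∑ j, (‖q j‖ : ℂ) / (w - z j)‖ := by
  refine ⟨4, by norm_num, ?_⟩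
  intro m hm a ha
  obtain ⟨m', rfl⟩ : ∃ m', m = m' + 1 := ⟨m - 1, by omega⟩
  set M := m' + 1 with hM
  -- the clustering parameter
  set b : ℝ := 2 ^ ((M : ℝ)⁻¹) with hbdef
  have hb1 : 1 < b := by
    rw [hbdef]
    exact (Real.one_lt_rpow_iff_of_pos (by norm_num)).2 (Or.inl ⟨by norm_num, by positivity⟩)
  have hbm : b ^ M = 2 := by
    rw [hbdef, ← Real.rpow_natCast (2 ^ ((M:ℝ)⁻¹)) M, ← Real.rpow_mul (by norm_num)]
    rw [inv_mul_cancel₀ (by positivity : (M:ℝ) ≠ 0), Real.rpow_one]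
  set δ : ℝ := (b - 1) / (b + 1) with hδdef
  have hδ0 : 0 < δ := div_pos (by linarith) (by linarith)
  have hδ1 : δ < 1 := by rw [hδdef, div_lt_one (by linarith)]; linarith
  have hbδ : 1 + δ = b * (1 - δ) := by
    rw [hδdef]; field_simp; ring
  -- the nodes
  set t : Fin p → ℕ → ℂ := fun k i => c k + ((δ * r k / M * ((i : ℝ) + 1) : ℝ) : ℂ) with htdef
  have htinj : ∀ k : Fin p, ∀ i < M, ∀ i' < M, t k i = t k i' → i = i' := by
    intro k i _ i' _ h
    rw [htdef] at h
    simp only [add_right_inj, Complex.ofReal_inj] at h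
    have hc0 : δ * r k / M ≠ 0 := by
      have := hr k
      positivity
    have := mul_left_cancel₀ hc0 h
    exact_mod_cast add_right_cancel this
  -- disk assignment
  have hsel : ∀ j, ∃ k, ‖z j - c k‖ ≤ r k := by
    intro j
    obtain ⟨k, hk⟩ := Set.mem_iUnion.1 (hz j)
    rw [Metric.mem_closedBall, dist_eq_norm] at hk
    exact ⟨k, hk⟩
  choose kj hkj using hsel
  -- the per-pole coefficients
  choose γf hγf using fun j => newton_aux (t (kj j)) (z j) M (htinj (kj j))
  refine ⟨fun x => ∑ j, if kj j = (finProdFinEquiv.symm x).2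
      then q j * γf j ((finProdFinEquiv.symm x).1 : ℕ) else 0,
    fun x => t (finProdFinEquiv.symm x).2 ((finProdFinEquiv.symm x).1 : ℕ), ?_⟩
  intro w hw
  -- basic geometric estimates
  have hwc : ∀ k, a * r k ≤ ‖w - c k‖ := fun k =>
    le_trans (hw k) (by exact Complex.re_le_norm _)
  have hwc0 : ∀ k, 0 < ‖w - c k‖ := fun k =>
    lt_of_lt_of_le (by have := hr k; positivity) (hwc k)
  have hrwc : ∀ k, r k ≤ ‖w - c k‖ := fun k =>
    le_trans (by nlinarith [hr k]) (hwc k)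
  have hε : ∀ k : Fin p, ∀ i < M, 0 ≤ δ * r k / M * ((i:ℝ) + 1) ∧
      δ * r k / M * ((i:ℝ) + 1) ≤ δ * r k := by
    intro k i hi
    have h1 : (0:ℝ) < M := by positivity
    have h2 : ((i:ℝ) + 1) ≤ (M:ℝ) := by
      have h3 : (i + 1 : ℕ) ≤ M := hi
      exact_mod_cast h3
    constructor
    · have := (hr k).le; positivity
    · rw [div_mul_eq_mul_div, div_le_iff₀ h1]
      exact mul_le_mul_of_nonneg_left h2 (mul_nonneg hδ0.le (hr k).le)
  have hwt : ∀ k : Fin p, ∀ i < M, (1 - δ) * ‖w - c k‖ ≤ ‖w - t k i‖ := by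
    intro k i hi
    obtain ⟨hε0, hε1⟩ := hε k i hi
    have h1 : w - t k i = (w - c k) - ((δ * r k / M * ((i:ℝ) + 1) : ℝ) : ℂ) := by
      rw [htdef]; ring
    rw [h1]
    have h2 := norm_sub_norm_le (w - c k) ((δ * r k / M * ((i:ℝ) + 1) : ℝ) : ℂ)
    rw [Complex.norm_real, Real.norm_eq_abs, abs_of_nonneg hε0] at h2
    have h3 : δ * r k ≤ δ * ‖w - c k‖ := mul_le_mul_of_nonneg_left (hrwc k) hδ0.le
    nlinarith
  have hwt0 : ∀ k : Fin p, ∀ i < M, (0:ℝ) < ‖w - t k i‖ := fun k i hi =>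
    lt_of_lt_of_le (by have := hwc0 k; nlinarith) (hwt k i hi)
  have hwtne : ∀ k : Fin p, ∀ i < M, w ≠ t k i := by
    intro k i hi
    intro h
    have := hwt0 k i hi
    rw [h, sub_self, norm_zero] at this
    exact lt_irrefl _ this
  have hzt : ∀ j, ∀ i < M, ‖z j - t (kj j) i‖ ≤ (1 + δ) * r (kj j) := by
    intro j i hi
    obtain ⟨hε0, hε1⟩ := hε (kj j) i hi
    have h1 : z j - t (kj j) i
        = (z j - c (kj j)) - ((δ * r (kj j) / M * ((i:ℝ) + 1) : ℝ) : ℂ) := by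
      rw [htdef]; ring
    rw [h1]
    refine le_trans (norm_sub_le _ _) ?_
    rw [Complex.norm_real, Real.norm_eq_abs, abs_of_nonneg hε0]
    have := hkj j
    linarith
  have hre : ∀ j, (a - 1) * r (kj j) ≤ (w - z j).re := by
    intro j
    have h1 : (w - z j).re = (w - c (kj j)).re - (z j - c (kj j)).re := by
      simp [Complex.sub_re]
    have h2 : (z j - c (kj j)).re ≤ r (kj j) := by
      refine le_trans ?_ (hkj j)
      exact Complex.re_le_norm _
    have h3 := hw (kj j)
    rw [h1]; nlinarith
  have hwzne : ∀ j, w ≠ z j := by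
    intro j h
    have h1 := hre j
    rw [h, sub_self] at h1
    simp only [Complex.zero_re] at h1
    nlinarith [hr (kj j)]
  have hwz0 : ∀ j, (0:ℝ) < ‖w - z j‖ := by
    intro j
    rw [norm_pos_iff, sub_ne_zero]
    exact hwzne j
  show ‖(∑ j, q j / (w - z j)) - ∑ x : Fin (M * p),
      (∑ j, if kj j = (finProdFinEquiv.symm x).2
          then q j * γf j ((finProdFinEquiv.symm x).1 : ℕ) else 0) /
        (w - t (finProdFinEquiv.symm x).2 ((finProdFinEquiv.symm x).1 : ℕ))‖
    ≤ 4 * (a ^ 2 + 1) / ((a ^ M - 1) * (a - 1) ^ 2) * ‖∑ j, (‖q j‖ : ℂ) / (w - z j)‖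
  set Ca := 4 * (a ^ 2 + 1) / ((a ^ M - 1) * (a - 1) ^ 2) with hCadef
  -- rewriting the approximant as a double sum
  have hgsum : (∑ x : Fin (M * p),
      (∑ j, if kj j = (finProdFinEquiv.symm x).2
          then q j * γf j ((finProdFinEquiv.symm x).1 : ℕ) else 0) /
        (w - t (finProdFinEquiv.symm x).2 ((finProdFinEquiv.symm x).1 : ℕ)))
      = ∑ j, q j * ∑ i ∈ Finset.range M, γf j i / (w - t (kj j) i) := by
    calc (∑ x : Fin (M * p),
        (∑ j, if kj j = (finProdFinEquiv.symm x).2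
            then q j * γf j ((finProdFinEquiv.symm x).1 : ℕ) else 0) /
          (w - t (finProdFinEquiv.symm x).2 ((finProdFinEquiv.symm x).1 : ℕ)))
        = ∑ ik : Fin M × Fin p,
            (∑ j, if kj j = ik.2 then q j * γf j (ik.1 : ℕ) else 0) /
              (w - t ik.2 (ik.1 : ℕ)) :=
          Equiv.sum_comp finProdFinEquiv.symm
            (fun ik => (∑ j, if kj j = ik.2 then q j * γf j (ik.1 : ℕ) else 0) /
              (w - t ik.2 (ik.1 : ℕ)))
      _ = ∑ i : Fin M, ∑ k : Fin p,
            (∑ j, if kj j = k then q j * γf j (i : ℕ) else 0) / (w - t k (i : ℕ)) :=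
          Fintype.sum_prod_type _
      _ = ∑ i : Fin M, ∑ j, q j * γf j (i : ℕ) / (w - t (kj j) (i : ℕ)) := by
          simp only [Finset.sum_div, ite_div, zero_div]
          refine Finset.sum_congr rfl fun i _ => ?_
          rw [Finset.sum_comm]
          refine Finset.sum_congr rfl fun j _ => ?_
          simp [Finset.sum_ite_eq]
      _ = ∑ j, ∑ i : Fin M, q j * (γf j (i : ℕ) / (w - t (kj j) (i : ℕ))) := by
          rw [Finset.sum_comm]
          exact Finset.sum_congr rfl fun j _ =>
            Finset.sum_congr rfl fun i _ => mul_div_assoc _ _ _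
      _ = ∑ j, q j * ∑ i ∈ Finset.range M, γf j i / (w - t (kj j) i) := by
          refine Finset.sum_congr rfl fun j _ => ?_
          rw [← Finset.mul_sum,
            Fin.sum_univ_eq_sum_range (fun i => γf j i / (w - t (kj j) i)) M]
  have hkey : (∑ j, q j / (w - z j)) - (∑ x : Fin (M * p),
      (∑ j, if kj j = (finProdFinEquiv.symm x).2
          then q j * γf j ((finProdFinEquiv.symm x).1 : ℕ) else 0) /
        (w - t (finProdFinEquiv.symm x).2 ((finProdFinEquiv.symm x).1 : ℕ)))
      = ∑ j, q j * ((∏ i ∈ Finset.range M, (z j - t (kj j) i)) /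
          ((∏ i ∈ Finset.range M, (w - t (kj j) i)) * (w - z j))) := by
    rw [hgsum, ← Finset.sum_sub_distrib]
    refine Finset.sum_congr rfl fun j _ => ?_
    have h := hγf j w (fun i hi => hwtne (kj j) i hi) (hwzne j)
    calc q j / (w - z j) - q j * ∑ i ∈ Finset.range M, γf j i / (w - t (kj j) i)
        = q j * (1 / (w - z j)
            - ∑ i ∈ Finset.range M, γf j i / (w - t (kj j) i)) := by ring
      _ = q j * ((∏ i ∈ Finset.range M, (z j - t (kj j) i)) /
          ((∏ i ∈ Finset.range M, (w - t (kj j) i)) * (w - z j))) := by rw [h]; ring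
  -- per-pole estimate
  have hnzle : ∀ j, ‖w - z j‖ ≤ ‖w - c (kj j)‖ + r (kj j) := by
    intro j
    have h1 : w - z j = (w - c (kj j)) - (z j - c (kj j)) := by ring
    rw [h1]
    exact le_trans (norm_sub_le _ _) (by linarith [hkj j])
  have hremj : ∀ j, ‖(∏ i ∈ Finset.range M, (z j - t (kj j) i)) /
      ((∏ i ∈ Finset.range M, (w - t (kj j) i)) * (w - z j))‖
      ≤ Ca * ((w - z j).re / ‖w - z j‖ ^ 2) := by
    intro j
    have hrk := hr (kj j)
    have hTk := hwc (kj j)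
    have hT0 := hwc0 (kj j)
    have hnz0 := hwz0 j
    have h1 : ‖∏ i ∈ Finset.range M, (z j - t (kj j) i)‖ ≤ ((1 + δ) * r (kj j)) ^ M := by
      rw [norm_prod]
      calc ∏ i ∈ Finset.range M, ‖z j - t (kj j) i‖
          ≤ ∏ _i ∈ Finset.range M, ((1 + δ) * r (kj j)) :=
            Finset.prod_le_prod (fun i _ => norm_nonneg _)
              (fun i hi => hzt j i (Finset.mem_range.1 hi))
        _ = ((1 + δ) * r (kj j)) ^ M := by rw [Finset.prod_const, Finset.card_range]
    have h2 : ((1 - δ) * ‖w - c (kj j)‖) ^ M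
        ≤ ‖∏ i ∈ Finset.range M, (w - t (kj j) i)‖ := by
      rw [norm_prod]
      calc ((1 - δ) * ‖w - c (kj j)‖) ^ M
          = ∏ _i ∈ Finset.range M, ((1 - δ) * ‖w - c (kj j)‖) := by
            rw [Finset.prod_const, Finset.card_range]
        _ ≤ ∏ i ∈ Finset.range M, ‖w - t (kj j) i‖ :=
            Finset.prod_le_prod
              (fun i _ => mul_nonneg (by linarith) (norm_nonneg _))
              (fun i hi => hwt (kj j) i (Finset.mem_range.1 hi))
    have hd0 : (0:ℝ) < ((1 - δ) * ‖w - c (kj j)‖) ^ M :=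
      pow_pos (mul_pos (by linarith) hT0) M
    have h3 : ‖(∏ i ∈ Finset.range M, (z j - t (kj j) i)) /
        ((∏ i ∈ Finset.range M, (w - t (kj j) i)) * (w - z j))‖
        ≤ ((1 + δ) * r (kj j)) ^ M / (((1 - δ) * ‖w - c (kj j)‖) ^ M * ‖w - z j‖) := by
      rw [norm_div, norm_mul]
      refine div_le_div₀ (by positivity) h1 (by positivity) ?_
      exact mul_le_mul_of_nonneg_right h2 (norm_nonneg _)
    have h4 : ((1 + δ) * r (kj j)) ^ M / (((1 - δ) * ‖w - c (kj j)‖) ^ M * ‖w - z j‖)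
        = 2 * r (kj j) ^ M / (‖w - c (kj j)‖ ^ M * ‖w - z j‖) := by
      have hδM : (1 - δ) ^ M ≠ 0 := pow_ne_zero _ (by linarith)
      have e1 : ((1 + δ) * r (kj j)) ^ M = 2 * ((1 - δ) ^ M * r (kj j) ^ M) := by
        rw [hbδ, mul_assoc, mul_pow, mul_pow, hbm]
      have e2 : ((1 - δ) * ‖w - c (kj j)‖) ^ M = (1 - δ) ^ M * ‖w - c (kj j)‖ ^ M :=
        mul_pow _ _ _
      rw [e1, e2]
      calc 2 * ((1 - δ) ^ M * r (kj j) ^ M) / ((1 - δ) ^ M * ‖w - c (kj j)‖ ^ M * ‖w - z j‖)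
          = (1 - δ) ^ M * (2 * r (kj j) ^ M) /
              ((1 - δ) ^ M * (‖w - c (kj j)‖ ^ M * ‖w - z j‖)) := by ring
        _ = 2 * r (kj j) ^ M / (‖w - c (kj j)‖ ^ M * ‖w - z j‖) :=
            mul_div_mul_left _ _ hδM
    have h5 : 2 * r (kj j) ^ M / (‖w - c (kj j)‖ ^ M * ‖w - z j‖)
        ≤ Ca * ((w - z j).re / ‖w - z j‖ ^ 2) := by
      have hnum := numeric_aux a (r (kj j)) (‖w - c (kj j)‖) (‖w - z j‖)
        ((w - z j).re) m' ha hrk hTk (hnzle j) (hre j)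
      rw [← hM, ← hCadef] at hnum
      rw [← mul_div_assoc, div_le_div_iff₀ (by positivity) (by positivity)]
      nlinarith [mul_le_mul_of_nonneg_right hnum hnz0.le]
    calc ‖(∏ i ∈ Finset.range M, (z j - t (kj j) i)) /
        ((∏ i ∈ Finset.range M, (w - t (kj j) i)) * (w - z j))‖
        ≤ ((1 + δ) * r (kj j)) ^ M / (((1 - δ) * ‖w - c (kj j)‖) ^ M * ‖w - z j‖) := h3
      _ = 2 * r (kj j) ^ M / (‖w - c (kj j)‖ ^ M * ‖w - z j‖) := h4
      _ ≤ Ca * ((w - z j).re / ‖w - z j‖ ^ 2) := h5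
  -- positivity of the constant
  have hCa0 : 0 ≤ Ca := by
    have hpm : 1 < a ^ M := one_lt_pow₀ ha (by omega)
    have hD : (0:ℝ) < (a ^ M - 1) * (a - 1) ^ 2 :=
      mul_pos (by linarith) (pow_pos (by linarith : (0:ℝ) < a - 1) 2)
    rw [hCadef]
    exact div_nonneg (by positivity) hD.le
  -- the real part of the majorant sum
  have hSre : (∑ j, ((‖q j‖ : ℂ) / (w - z j))).re
      = ∑ j, ‖q j‖ * ((w - z j).re / ‖w - z j‖ ^ 2) := by
    rw [Complex.re_sum]
    refine Finset.sum_congr rfl fun j _ => ?_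
    rw [div_eq_mul_inv, Complex.mul_re, Complex.ofReal_re, Complex.ofReal_im,
      zero_mul, sub_zero, Complex.inv_re, Complex.normSq_eq_norm_sq]
  -- final assembly
  rw [hkey]
  refine le_trans (norm_sum_le _ _) ?_
  have hstep : ∑ j, ‖q j * ((∏ i ∈ Finset.range M, (z j - t (kj j) i)) /
      ((∏ i ∈ Finset.range M, (w - t (kj j) i)) * (w - z j)))‖
      ≤ ∑ j, ‖q j‖ * (Ca * ((w - z j).re / ‖w - z j‖ ^ 2)) := by
    refine Finset.sum_le_sum fun j _ => ?_
    rw [norm_mul]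
    exact mul_le_mul_of_nonneg_left (hremj j) (norm_nonneg _)
  refine le_trans hstep ?_
  have hswap : ∑ j, ‖q j‖ * (Ca * ((w - z j).re / ‖w - z j‖ ^ 2))
      = Ca * ∑ j, ‖q j‖ * ((w - z j).re / ‖w - z j‖ ^ 2) := by
    rw [Finset.mul_sum]
    exact Finset.sum_congr rfl fun j _ => by ring
  rw [hswap, ← hSre]
  exact mul_le_mul_of_nonneg_left
    (by exact Complex.re_le_norm _) hCa0
end
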